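/- Let V₃ = {(z,z') ∈ S¹×S¹ : Re z ≠ Re z'} be the set of pairs of points of the circle not at the same vertical level. Then V₃ is a symmetric open subset of S¹×S¹ and admits a symmetric motion planning rule. -/

import Mathlib

open unitInterval

/-- A subset of `S¹ × S¹` is symmetric if `(x, y) ∈ V` implies `(y, x) ∈ V`. -/
def IsSymmetricSet (V : Set (Circle × Circle)) : Prop :=
  ∀ x y : Circle, (x, y) ∈ V → (y, x) ∈ V

/-- `s` is a symmetric motion planning rule on `V ⊆ S¹ × S¹`: a continuous map from `V`
to the path space `C(I, S¹) = PS¹` (carrying the compact-open topology), sending each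
`(x, y) ∈ V` to a path from `x` to `y`, such that `s (y, x)` is the time-reversal of
`s (x, y)`. -/
def IsSymmetricMPR (V : Set (Circle × Circle)) (s : V → C(unitInterval, Circle)) : Prop :=
  Continuous s ∧
  (∀ p : V, s p 0 = p.1.1 ∧ s p 1 = p.1.2) ∧
  (∀ (x y : Circle) (hxy : (x, y) ∈ V) (hyx : (y, x) ∈ V) (t : unitInterval),
    s ⟨(y, x), hyx⟩ t = s ⟨(x, y), hxy⟩ (σ t))

noncomputable section

/-- The angle of `w` in `(0, 2π]`. -/
noncomputable def thetaC (w : Circle) : ℝ := Real.pi + Complex.arg (-(w : ℂ))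

lemma exp_thetaC (w : Circle) : Circle.exp (thetaC w) = w := by
  ext
  have habs : ‖(-(w : ℂ))‖ = 1 := by simp [Circle.norm_coe]
  have h := Complex.norm_mul_exp_arg_mul_I (-(w : ℂ))
  rw [habs] at h
  push_cast [Circle.coe_exp, thetaC]
  rw [add_mul, Complex.exp_add, Complex.exp_pi_mul_I]
  simp only [Complex.ofReal_one, one_mul] at h
  rw [h]
  ring

lemma neg_mem_slitPlane {w : Circle} (hw : w ≠ 1) : -(w : ℂ) ∈ Complex.slitPlane := by
  rw [Complex.mem_slitPlane_iff]
  by_contra hc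
  push_neg at hc
  obtain ⟨h1, h2⟩ := hc
  -- w is real, nonneg real of abs 1, so w = 1
  have hre : (w : ℂ).re ≥ 0 := by
    have := h1; simp only [Complex.neg_re] at this; linarith
  have him : (w : ℂ).im = 0 := by
    simpa using h2
  have habs : ‖(w : ℂ)‖ = 1 := Circle.norm_coe w
  have : (w : ℂ) = 1 := by
    have h3 : (w : ℂ).re = 1 := by
      rw [Complex.norm_def, Complex.normSq_apply, him] at habs
      nlinarith [Real.sq_sqrt (show (0:ℝ) ≤ (w:ℂ).re * (w:ℂ).re + 0 * 0 by nlinarith)]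
    exact Complex.ext h3 him
  exact hw (by ext; simpa using this)

lemma arg_neg_ne_pi {w : Circle} (hw : w ≠ 1) : (-(w : ℂ)).arg ≠ Real.pi := by
  intro h
  have := Complex.arg_eq_pi_iff.mp h
  obtain ⟨h1, h2⟩ := this
  have := neg_mem_slitPlane hw
  rw [Complex.mem_slitPlane_iff] at this
  rcases this with h | h
  · linarith
  · exact h (by simpa using h2)

lemma thetaC_inv {w : Circle} (hw : w ≠ 1) : thetaC w⁻¹ = 2 * Real.pi - thetaC w := by
  unfold thetaC
  have hconj : -((w⁻¹ : Circle) : ℂ) = (starRingEnd ℂ) (-(w : ℂ)) := by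
    rw [Circle.coe_inv_eq_conj]; simp
  rw [hconj, Complex.arg_conj, if_neg (arg_neg_ne_pi hw)]
  ring

lemma exp_two_pi : Circle.exp (2 * Real.pi) = 1 := by
  ext
  rw [Circle.coe_exp]
  push_cast
  
  simp [Complex.exp_two_pi_mul_I]

/-- the antisymmetric angle -/
noncomputable def phi (x y : Circle) : ℝ :=
  if (x : ℂ).re < (y : ℂ).re then thetaC (x⁻¹ * y) else thetaC (x⁻¹ * y) - 2 * Real.pi

lemma exp_phi (x y : Circle) : Circle.exp (phi x y) = x⁻¹ * y := by
  unfold phi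
  split_ifs
  · exact exp_thetaC _
  · rw [sub_eq_add_neg, Circle.exp_add, exp_thetaC]
    have : Circle.exp (-(2 * Real.pi)) = 1 := by
      have := exp_two_pi
      have h2 : Circle.exp (2 * Real.pi) * Circle.exp (-(2 * Real.pi)) = 1 := by
        rw [← Circle.exp_add]; simp
      rw [this, one_mul] at h2; exact h2
    rw [this, mul_one]

lemma ne_one_of_re_ne {x y : Circle} (h : (x : ℂ).re ≠ (y : ℂ).re) : x⁻¹ * y ≠ 1 := by
  intro hc
  apply h
  have : y = x := by
    have := mul_eq_one_iff_inv_eq.mp hc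
    rw [← this]; simp
  rw [this]

lemma phi_antisymm {x y : Circle} (h : (x : ℂ).re ≠ (y : ℂ).re) : phi y x = - phi x y := by
  have hxy : x⁻¹ * y ≠ 1 := ne_one_of_re_ne h
  have hinv : (x⁻¹ * y)⁻¹ = y⁻¹ * x := by group
  unfold phi
  rcases lt_or_gt_of_ne h with hl | hl
  · rw [if_pos hl, if_neg (by exact not_lt.mpr hl.le)]
    rw [← hinv, thetaC_inv hxy]; ring
  · rw [if_pos hl, if_neg (by exact not_lt.mpr hl.le)]
    rw [← hinv, thetaC_inv hxy]; ring

lemma phi_eq (x y : Circle) :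
    phi x y = thetaC (x⁻¹ * y) - (if (x : ℂ).re < (y : ℂ).re then (0:ℝ) else 2 * Real.pi) := by
  unfold phi; split_ifs <;> ring

section Main

abbrev V3 : Set (Circle × Circle) := {p : Circle × Circle | (p.1 : ℂ).re ≠ (p.2 : ℂ).re}

lemma cont_theta_part : Continuous fun v : V3 => thetaC ((v.1.1)⁻¹ * v.1.2) := by
  rw [continuous_iff_continuousAt]
  intro v
  have hcirc : Continuous fun v : V3 => (v.1.1)⁻¹ * v.1.2 := by fun_prop
  have hg : Continuous fun v : V3 => -((((v.1.1)⁻¹ * v.1.2 : Circle)) : ℂ) :=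
    (by fun_prop : Continuous fun z : Circle => -(z : ℂ)).comp hcirc
  have harg : ContinuousAt Complex.arg (-((((v.1.1)⁻¹ * v.1.2 : Circle)) : ℂ)) :=
    Complex.continuousAt_arg (neg_mem_slitPlane (ne_one_of_re_ne v.2))
  exact continuousAt_const.add
    (ContinuousAt.comp (g := Complex.arg)
      (f := fun v : V3 => -((((v.1.1)⁻¹ * v.1.2 : Circle)) : ℂ)) harg hg.continuousAt)

lemma cont_ind : Continuous fun v : V3 =>
    (if ((v.1.1 : Circle) : ℂ).re < ((v.1.2 : Circle) : ℂ).re then (0:ℝ) else 2 * Real.pi) := by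
  rw [continuous_iff_continuousAt]
  intro v
  have hlt : IsOpen {w : V3 | ((w.1.1 : Circle) : ℂ).re < ((w.1.2 : Circle) : ℂ).re} := by
    apply IsOpen.preimage (by fun_prop : Continuous (fun w : V3 => (((w.1.1 : Circle):ℂ).re, ((w.1.2 : Circle):ℂ).re)))
      (isOpen_lt continuous_fst continuous_snd)
  have hgt : IsOpen {w : V3 | ((w.1.2 : Circle) : ℂ).re < ((w.1.1 : Circle) : ℂ).re} := by
    apply IsOpen.preimage (by fun_prop : Continuous (fun w : V3 => (((w.1.1 : Circle):ℂ).re, ((w.1.2 : Circle):ℂ).re)))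
      (isOpen_lt continuous_snd continuous_fst)
  rcases lt_or_gt_of_ne v.2 with hl | hl
  · apply ContinuousAt.congr continuousAt_const
    filter_upwards [hlt.mem_nhds hl] with w hw
    rw [if_pos hw]
  · apply ContinuousAt.congr continuousAt_const
    filter_upwards [hgt.mem_nhds hl] with w hw
    rw [if_neg (not_lt.mpr hw.le)]

lemma cont_phi : Continuous fun v : V3 => phi v.1.1 v.1.2 := by
  simp only [phi_eq]
  exact cont_theta_part.sub cont_ind

noncomputable def Fmap : C(V3 × unitInterval, Circle) :=
  ⟨fun q => q.1.1.1 * Circle.exp ((q.2 : ℝ) * phi q.1.1.1 q.1.1.2), by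
    apply Continuous.mul (by fun_prop)
    exact Circle.exp.continuous.comp (Continuous.mul (by fun_prop)
      (cont_phi.comp continuous_fst))⟩

theorem distinct_re_symmetric_mpr :
    IsOpen {p : Circle × Circle | (p.1 : ℂ).re ≠ (p.2 : ℂ).re} ∧
    IsSymmetricSet {p : Circle × Circle | (p.1 : ℂ).re ≠ (p.2 : ℂ).re} ∧
    ∃ s : {p : Circle × Circle | (p.1 : ℂ).re ≠ (p.2 : ℂ).re} → C(unitInterval, Circle),
      IsSymmetricMPR {p : Circle × Circle | (p.1 : ℂ).re ≠ (p.2 : ℂ).re} s := by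
  refine ⟨?_, ?_, ?_⟩
  · exact isOpen_ne_fun (by fun_prop) (by fun_prop)
  · intro x y h
    exact (h : _ ≠ _).symm
  · refine ⟨⇑(ContinuousMap.curry Fmap), (ContinuousMap.curry Fmap).continuous, ?_, ?_⟩
    · intro p
      constructor
      · show Fmap (p, 0) = p.1.1
        show p.1.1 * Circle.exp (((0 : unitInterval) : ℝ) * phi p.1.1 p.1.2) = p.1.1
        norm_num [Circle.exp_zero]
      · show Fmap (p, 1) = p.1.2
        show p.1.1 * Circle.exp (((1 : unitInterval) : ℝ) * phi p.1.1 p.1.2) = p.1.2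
        rw [Set.Icc.coe_one, one_mul, exp_phi]
        group
    · intro x y hxy hyx t
      show Fmap (_, t) = Fmap (_, σ t)
      show y * Circle.exp ((t : ℝ) * phi y x) = x * Circle.exp (((σ t : unitInterval) : ℝ) * phi x y)
      rw [phi_antisymm hxy, unitInterval.coe_symm_eq,
        show (1 - (t:ℝ)) * phi x y = phi x y + (t : ℝ) * (-phi x y) by ring,
        Circle.exp_add, exp_phi]
      group

end Main

end
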